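/- For the path P_n on n ≥ 2 vertices, the middle 3-rainbow domination number is γ*_{r3}(P_n) = (4n−1)/3 if n ≡ 1 (mod 3), (4n+1)/3 if n ≡ 2 (mod 3), and 4n/3 if n ≡ 0 (mod 3). -/

import Mathlib

open SimpleGraph Finset

/-- A `k`-rainbow dominating function on a graph `H`. -/
def IsRDF {W : Type*} (H : SimpleGraph W) (k : ℕ) (f : W → Finset (Fin k)) : Prop :=
  ∀ w, f w = ∅ → ∀ c : Fin k, ∃ u, H.Adj w u ∧ c ∈ f u

/-- The weight of a rainbow dominating function. -/
noncomputable def rdfWeight {W : Type*} [Fintype W] {k : ℕ} (f : W → Finset (Fin k)) : ℕ :=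
  ∑ w, (f w).card

/-- The `k`-rainbow domination number of a graph. -/
noncomputable def rdn {W : Type*} [Fintype W] (H : SimpleGraph W) (k : ℕ) : ℕ :=
  sInf {n | ∃ f : W → Finset (Fin k), IsRDF H k f ∧ rdfWeight f = n}

/-- The middle graph of `G`, on vertex set `V(G) ⊕ E(G)`. -/
def middleGraph {V : Type*} (G : SimpleGraph V) : SimpleGraph (V ⊕ G.edgeSet) where
  Adj x y :=
    match x, y with
    | Sum.inl _, Sum.inl _ => False
    | Sum.inl v, Sum.inr e => v ∈ (e : Sym2 V)
    | Sum.inr e, Sum.inl v => v ∈ (e : Sym2 V)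
    | Sum.inr e, Sum.inr f => e ≠ f ∧ ∃ v, v ∈ (e : Sym2 V) ∧ v ∈ (f : Sym2 V)
  symm := by
    constructor
    rintro (v | e) (w | f) h
    · exact h.elim
    · exact h
    · exact h
    · exact ⟨Ne.symm h.1, h.2.imp fun v hv => ⟨hv.2, hv.1⟩⟩
  loopless := by
    constructor
    rintro (v | e) h
    · exact h.elim
    · exact h.1 rfl

/-- The middle `k`-rainbow domination number `γ*_{rk}(G)`. -/
noncomputable def mrdn {V : Type*} [Fintype V] (G : SimpleGraph V) (k : ℕ) : ℕ :=
  letI := Classical.decEq V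
  letI : DecidableRel G.Adj := fun _ _ => Classical.dec _
  rdn (middleGraph G) k

/-- The `k`-rainbow domatic number: the maximum size of a family of `k`-rainbow
dominating functions with `∑ i |f i v| ≤ k` for each vertex `v`. -/
noncomputable def rdomatic {W : Type*} (H : SimpleGraph W) (k : ℕ) : ℕ :=
  sSup {d | ∃ F : Fin d → W → Finset (Fin k), Function.Injective F ∧
    (∀ i, IsRDF H k (F i)) ∧ ∀ w, (∑ i, (F i w).card) ≤ k}

/-- The matching number `α'(G)`. -/
noncomputable def matchingNumber {V : Type*} [Fintype V] (G : SimpleGraph V) : ℕ :=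
  sSup {n | ∃ M : Finset (Sym2 V), ↑M ⊆ G.edgeSet ∧
    (∀ e ∈ M, ∀ f ∈ M, e ≠ f → ∀ v : V, ¬(v ∈ e ∧ v ∈ f)) ∧ M.card = n}

namespace S6

/-! ### Path graph edge infrastructure -/

def pedge (n k : ℕ) (hk : k + 1 < n) : (pathGraph n).edgeSet :=
  ⟨s(⟨k, by omega⟩, ⟨k+1, hk⟩), by
    rw [SimpleGraph.mem_edgeSet, SimpleGraph.pathGraph_adj]; left; rfl⟩

def eIdx {n : ℕ} (e : (pathGraph n).edgeSet) : ℕ :=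
  Sym2.lift ⟨fun a b => min a.val b.val, fun _ _ => Nat.min_comm _ _⟩ e.1

lemma eIdx_pedge (n k : ℕ) (hk : k + 1 < n) : eIdx (pedge n k hk) = k := by
  simp [eIdx, pedge]

lemma pedge_surj {n : ℕ} (e : (pathGraph n).edgeSet) :
    ∃ k, ∃ hk : k + 1 < n, pedge n k hk = e := by
  obtain ⟨e, he⟩ := e
  induction e using Sym2.ind with
  | _ u v =>
    rw [SimpleGraph.mem_edgeSet, SimpleGraph.pathGraph_adj] at he
    rcases he with h | h
    · refine ⟨u.val, by omega, Subtype.ext ?_⟩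
      rw [pedge, Sym2.eq_iff]
      exact Or.inl ⟨Fin.ext rfl, Fin.ext h⟩
    · refine ⟨v.val, by omega, Subtype.ext ?_⟩
      rw [pedge, Sym2.eq_iff]
      exact Or.inr ⟨Fin.ext rfl, Fin.ext h⟩

lemma mem_pedge_iff {n k : ℕ} {hk : k + 1 < n} (v : Fin n) :
    v ∈ ((pedge n k hk : (pathGraph n).edgeSet) : Sym2 (Fin n)) ↔
      v.val = k ∨ v.val = k + 1 := by
  simp [pedge, Sym2.mem_iff, Fin.ext_iff]

lemma pedge_inj {n : ℕ} {k j : ℕ} {hk : k + 1 < n} {hj : j + 1 < n}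
    (h : pedge n k hk = pedge n j hj) : k = j := by
  have := congrArg eIdx h; rwa [eIdx_pedge, eIdx_pedge] at this

lemma adj_inl {n : ℕ} {v : Fin n} {u} (h : (middleGraph (pathGraph n)).Adj (Sum.inl v) u) :
    ∃ k, ∃ hk : k + 1 < n, u = Sum.inr (pedge n k hk) ∧ (v.val = k ∨ v.val = k + 1) := by
  match u with
  | Sum.inl w => exact h.elim
  | Sum.inr e =>
    obtain ⟨k, hk, rfl⟩ := pedge_surj e
    exact ⟨k, hk, rfl, (mem_pedge_iff v).1 h⟩

lemma adj_inr {n : ℕ} {k : ℕ} {hk : k + 1 < n} {u}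
    (h : (middleGraph (pathGraph n)).Adj (Sum.inr (pedge n k hk)) u) :
    (∃ v : Fin n, u = Sum.inl v ∧ (v.val = k ∨ v.val = k + 1)) ∨
    (∃ j, ∃ hj : j + 1 < n, u = Sum.inr (pedge n j hj) ∧ (j = k + 1 ∨ j + 1 = k)) := by
  match u with
  | Sum.inl w => exact Or.inl ⟨w, rfl, (mem_pedge_iff w).1 h⟩
  | Sum.inr e =>
    obtain ⟨j, hj, rfl⟩ := pedge_surj e
    obtain ⟨hne, v, hv1, hv2⟩ := h
    refine Or.inr ⟨j, hj, rfl, ?_⟩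
    have hjk : j ≠ k := fun hh => hne (by subst hh; rfl)
    have h1 := (mem_pedge_iff v).1 hv1
    have h2 := (mem_pedge_iff v).1 hv2
    omega

/-- adjacency from inl to inr, forward direction -/
lemma adj_inl_inr {n : ℕ} (v : Fin n) (k : ℕ) (hk : k + 1 < n)
    (h : v.val = k ∨ v.val = k + 1) :
    (middleGraph (pathGraph n)).Adj (Sum.inl v) (Sum.inr (pedge n k hk)) := by
  show v ∈ ((pedge n k hk : (pathGraph n).edgeSet) : Sym2 (Fin n))
  exact (mem_pedge_iff v).2 h

lemma adj_inr_inr {n : ℕ} (k j : ℕ) (hk : k + 1 < n) (hj : j + 1 < n)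
    (h : j = k + 1 ∨ j + 1 = k) :
    (middleGraph (pathGraph n)).Adj (Sum.inr (pedge n k hk)) (Sum.inr (pedge n j hj)) := by
  refine ⟨fun hh => by have := pedge_inj hh; omega, ?_⟩
  rcases h with rfl | h
  · exact ⟨⟨k + 1, by omega⟩, (mem_pedge_iff _).2 (Or.inr rfl), (mem_pedge_iff _).2 (Or.inl rfl)⟩
  · refine ⟨⟨k, by omega⟩, (mem_pedge_iff _).2 (Or.inl rfl), (mem_pedge_iff _).2 (Or.inr ?_)⟩
    show k = j + 1
    omega

/-! ### The potential function and the combinatorial core -/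

def phi (pb a b : ℕ) : ℕ :=
  3 * (pb + a + b) +
    (if 3 ≤ pb then 0 else if pb = 2 then 2 else if pb = 1 then 3 else
      if a = 1 ∧ b = 0 then 5 else 4) - 6

lemma phi_base (a0 b0 : ℕ) (h1 : a0 ≤ 3) (h2 : b0 ≤ 3)
    (h : 1 ≤ a0 ∨ 3 ≤ 0 + b0) : 1 + phi 0 a0 b0 ≤ 3 * (a0 + b0) := by
  simp only [phi]; split_ifs <;> omega

lemma phi_step (pb a b a2 b2 : ℕ) (h1 : pb ≤ 3) (h2 : a ≤ 3) (h3 : b ≤ 3)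
    (h4 : a2 ≤ 3) (h5 : b2 ≤ 3)
    (hold : 1 ≤ a ∨ 3 ≤ pb + b) (hA : 1 ≤ a2 ∨ 3 ≤ b + b2)
    (hB : 1 ≤ b ∨ 3 ≤ a + a2 + pb + b2) :
    4 + phi b a2 b2 ≤ 3 * (a2 + b2) + phi pb a b := by
  simp only [phi]; split_ifs <;> omega

lemma phi_fin (pb a : ℕ) (h1 : pb ≤ 3) (h2 : a ≤ 3)
    (h : 1 ≤ a ∨ 3 ≤ pb + 0) : 2 ≤ phi pb a 0 := by
  simp only [phi, eq_self_iff_true, and_true]; split_ifs <;> omega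

lemma core (n : ℕ) (hn : 1 ≤ n) (a b : ℕ → ℕ)
    (ha3 : ∀ i, a i ≤ 3) (hb3 : ∀ j, b j ≤ 3)
    (hb0 : ∀ j, n - 1 ≤ j → b j = 0)
    (hA : ∀ i < n, 1 ≤ a i ∨ 3 ≤ (if i = 0 then 0 else b (i - 1)) + b i)
    (hB : ∀ k, k + 1 < n →
      1 ≤ b k ∨ 3 ≤ a k + a (k + 1) + (if k = 0 then 0 else b (k - 1)) + b (k + 1)) :
    4 * n - 1 ≤ 3 * ((∑ i ∈ range n, a i) + ∑ k ∈ range (n - 1), b k) := by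
  set pb : ℕ → ℕ := fun i => if i = 0 then 0 else b (i - 1) with hpb
  have hpb3 : ∀ i, pb i ≤ 3 := by
    intro i; by_cases h : i = 0 <;> simp [hpb, h, hb3]
  have Q : ∀ i < n, 4 * (i + 1) - 3 + phi (pb i) (a i) (b i) ≤
      3 * ((∑ j ∈ range (i + 1), a j) + ∑ j ∈ range (i + 1), b j) := by
    intro i
    induction i with
    | zero =>
      intro h0
      have h := hA 0 h0
      simp only [if_pos rfl] at h
      have e1 : ∑ j ∈ range (0 + 1), a j = a 0 := by simp
      have e2 : ∑ j ∈ range (0 + 1), b j = b 0 := by simp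
      rw [e1, e2]
      have hp0 : pb 0 = 0 := by simp [hpb]
      rw [hp0]
      have := phi_base (a 0) (b 0) (ha3 0) (hb3 0) h
      omega
    | succ i ih =>
      intro hi1
      have hi : i < n := by omega
      have IH := ih hi
      have hAi := hA i hi
      have hAi1 := hA (i + 1) hi1
      have hBi := hB i hi1
      have hg : pb (i + 1) = b i := by simp [hpb]
      rw [sum_range_succ, sum_range_succ (f := b), hg]
      have key := phi_step (pb i) (a i) (b i) (a (i + 1)) (b (i + 1))
        (hpb3 i) (ha3 i) (hb3 i) (ha3 (i + 1)) (hb3 (i + 1))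
        hAi (by simpa using hAi1) hBi
      omega
  have Qn := Q (n - 1) (by omega)
  have hbn : b (n - 1) = 0 := hb0 (n - 1) le_rfl
  have hAn := hA (n - 1) (by omega)
  have hn1 : n - 1 + 1 = n := by omega
  rw [hn1] at Qn
  rw [hbn] at Qn hAn
  have hsb : (∑ j ∈ range n, b j) = ∑ k ∈ range (n - 1), b k := by
    conv_lhs => rw [← hn1]
    rw [sum_range_succ, hbn, add_zero]
  rw [hsb] at Qn
  have hfin := phi_fin (pb (n - 1)) (a (n - 1)) (hpb3 _) (ha3 _) hAn
  omega

lemma card_cover2 {S1 S2 : Finset (Fin 3)} (h : ∀ c : Fin 3, c ∈ S1 ∨ c ∈ S2) :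
    3 ≤ S1.card + S2.card := by
  classical
  have hsub : (Finset.univ : Finset (Fin 3)) ⊆ S1 ∪ S2 := fun c _ =>
    Finset.mem_union.2 (h c)
  have h1 := Finset.card_le_card hsub
  have h2 := Finset.card_union_le S1 S2
  have h3 : (Finset.univ : Finset (Fin 3)).card = 3 := by simp
  omega

lemma card_cover4 {S1 S2 S3 S4 : Finset (Fin 3)}
    (h : ∀ c : Fin 3, c ∈ S1 ∨ c ∈ S2 ∨ c ∈ S3 ∨ c ∈ S4) :
    3 ≤ S1.card + S2.card + S3.card + S4.card := by
  classical
  have hsub : (Finset.univ : Finset (Fin 3)) ⊆ S1 ∪ S2 ∪ S3 ∪ S4 := by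
    intro c _
    simp only [Finset.mem_union]
    rcases h c with h' | h' | h' | h' <;> tauto
  have h1 := Finset.card_le_card hsub
  have h2 := Finset.card_union_le (S1 ∪ S2 ∪ S3) S4
  have h3 := Finset.card_union_le (S1 ∪ S2) S3
  have h4 := Finset.card_union_le S1 S2
  have h5 : (Finset.univ : Finset (Fin 3)).card = 3 := by simp
  omega

lemma card_le3 (S : Finset (Fin 3)) : S.card ≤ 3 := by
  have := Finset.card_le_univ S
  simpa using this

/-- The weight of any function, expressed as sums over `range`. -/
lemma weight_sum (n : ℕ) (hn : 2 ≤ n)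
    [instS : Fintype (Fin n ⊕ (pathGraph n).edgeSet)]
    (f : (Fin n ⊕ (pathGraph n).edgeSet) → Finset (Fin 3)) :
    (∑ w, (f w).card) =
      (∑ i ∈ range n, (if h : i < n then (f (Sum.inl ⟨i, h⟩)).card else 0)) +
       ∑ k ∈ range (n - 1),
         (if h : k + 1 < n then (f (Sum.inr (pedge n k h))).card else 0) := by
  classical
  have hΨbij : Function.Bijective
      (fun k : Fin (n - 1) => pedge n k.val (by omega)) := by
    constructor
    · intro x y hxy
      exact Fin.ext (pedge_inj hxy)
    · intro e
      obtain ⟨k, hk, he⟩ := pedge_surj e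
      exact ⟨⟨k, by omega⟩, he⟩
  let eqv : Fin (n - 1) ≃ (pathGraph n).edgeSet := Equiv.ofBijective _ hΨbij
  have heqv : ∀ k : Fin (n - 1), (eqv k : (pathGraph n).edgeSet) = pedge n k.val (by omega) :=
    fun k => rfl
  let E : (Fin n ⊕ (pathGraph n).edgeSet) ≃ (Fin n ⊕ Fin (n - 1)) :=
    (Equiv.refl (Fin n)).sumCongr eqv.symm
  have step1 : (∑ w, (f w).card) = ∑ z : Fin n ⊕ Fin (n - 1),
      (match z with
       | Sum.inl i => (f (Sum.inl i)).card
       | Sum.inr k => (f (Sum.inr (eqv k))).card) := by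
    apply Fintype.sum_equiv E
    intro w
    match w with
    | Sum.inl i => rfl
    | Sum.inr e =>
      show (f (Sum.inr e)).card = (f (Sum.inr (eqv (eqv.symm e)))).card
      rw [Equiv.apply_symm_apply]
  rw [step1, Fintype.sum_sum_type]
  congr 1
  · rw [← Fin.sum_univ_eq_sum_range (fun i => if h : i < n then (f (Sum.inl ⟨i, h⟩)).card else 0)]
    apply Finset.sum_congr rfl
    intro i _
    show (f (Sum.inl i)).card = _
    rw [dif_pos i.isLt]
  · rw [← Fin.sum_univ_eq_sum_range
      (fun k => if h : k + 1 < n then (f (Sum.inr (pedge n k h))).card else 0)]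
    apply Finset.sum_congr rfl
    intro k _
    have hk : k.val + 1 < n := by omega
    show (f (Sum.inr (eqv k))).card = _
    rw [dif_pos hk, heqv]

/-- Lower bound -/
lemma lower (n : ℕ) (hn : 2 ≤ n)
    [instS : Fintype (Fin n ⊕ (pathGraph n).edgeSet)]
    (f : (Fin n ⊕ (pathGraph n).edgeSet) → Finset (Fin 3))
    (hf : IsRDF (middleGraph (pathGraph n)) 3 f) :
    4 * n - 1 ≤ 3 * rdfWeight f := by
  classical
  set A : ℕ → Finset (Fin 3) :=
    fun i => if h : i < n then f (Sum.inl ⟨i, h⟩) else ∅ with hAdef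
  set B : ℕ → Finset (Fin 3) :=
    fun k => if h : k + 1 < n then f (Sum.inr (pedge n k h)) else ∅ with hBdef
  have ha3 : ∀ i, (A i).card ≤ 3 := fun i => card_le3 _
  have hb3 : ∀ j, (B j).card ≤ 3 := fun j => card_le3 _
  have hb0 : ∀ j, n - 1 ≤ j → (B j).card = 0 := by
    intro j hj
    have : ¬ (j + 1 < n) := by omega
    simp [hBdef, this]
  -- vertex constraints
  have hA : ∀ i < n, 1 ≤ (A i).card ∨
      3 ≤ (if i = 0 then 0 else (B (i - 1)).card) + (B i).card := by
    intro i hi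
    by_cases hz : (A i).card = 0
    · right
      have hAe : A i = ∅ := Finset.card_eq_zero.1 hz
      have hfe : f (Sum.inl (⟨i, hi⟩ : Fin n)) = ∅ := by
        rw [hAdef] at hAe; simpa [dif_pos hi] using hAe
      have hcov : ∀ c : Fin 3, c ∈ (if i = 0 then (∅ : Finset (Fin 3)) else B (i - 1)) ∨ c ∈ B i := by
        intro c
        obtain ⟨u, hu, hcu⟩ := hf _ hfe c
        obtain ⟨k, hk, rfl, hik⟩ := adj_inl hu
        simp only at hik
        rcases hik with hik | hik
        · right
          replace hik : i = k := hik
          subst hik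
          have hBi : B i = f (Sum.inr (pedge n i hk)) := by
            simp [hBdef, dif_pos hk]
          rw [hBi]; exact hcu
        · left
          replace hik : i = k + 1 := hik
          have hine : ¬ (i = 0) := by omega
          rw [if_neg hine]
          have hkk : i - 1 = k := by omega
          have hBi : B (i - 1) = f (Sum.inr (pedge n k hk)) := by
            rw [hkk]; simp [hBdef, dif_pos hk]
          rw [hBi]; exact hcu
      have := card_cover2 hcov
      split_ifs at this ⊢ with h0
      · simpa using this
      · exact this
    · left; omega
  -- edge constraints
  have hB : ∀ k, k + 1 < n → 1 ≤ (B k).card ∨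
      3 ≤ (A k).card + (A (k + 1)).card +
        (if k = 0 then 0 else (B (k - 1)).card) + (B (k + 1)).card := by
    intro k hk
    by_cases hz : (B k).card = 0
    · right
      have hBe : B k = ∅ := Finset.card_eq_zero.1 hz
      have hfe : f (Sum.inr (pedge n k hk)) = ∅ := by
        rw [hBdef] at hBe; simpa [dif_pos hk] using hBe
      have hcov : ∀ c : Fin 3, c ∈ A k ∨ c ∈ A (k + 1) ∨
          c ∈ (if k = 0 then (∅ : Finset (Fin 3)) else B (k - 1)) ∨ c ∈ B (k + 1) := by
        intro c
        obtain ⟨u, hu, hcu⟩ := hf _ hfe c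
        rcases adj_inr hu with ⟨v, rfl, hv⟩ | ⟨j, hj, rfl, hjk⟩
        · rcases hv with hv | hv
          · left
            have hkn : k < n := by omega
            have hveq : v = ⟨k, hkn⟩ := Fin.ext hv
            have hAk : A k = f (Sum.inl (⟨k, hkn⟩ : Fin n)) := by
              simp [hAdef, dif_pos hkn]
            rw [hAk, ← hveq]; exact hcu
          · right; left
            have hveq : v = ⟨k + 1, hk⟩ := Fin.ext hv
            have hAk : A (k + 1) = f (Sum.inl (⟨k + 1, hk⟩ : Fin n)) := by
              simp [hAdef, dif_pos hk]
            rw [hAk, ← hveq]; exact hcu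
        · rcases hjk with hjk | hjk
          · right; right; right
            have : B (k + 1) = f (Sum.inr (pedge n j hj)) := by
              subst hjk; simp [hBdef, dif_pos hj]
            rw [this]; exact hcu
          · right; right; left
            have hkne : ¬ (k = 0) := by omega
            rw [if_neg hkne]
            have : B (k - 1) = f (Sum.inr (pedge n j hj)) := by
              have : k - 1 = j := by omega
              subst this; simp [hBdef, dif_pos hj]
            rw [this]; exact hcu
      have := card_cover4 hcov
      split_ifs at this ⊢ with h0
      · simpa using this
      · exact this
    · left; omega
  have hw : rdfWeight f =
      (∑ i ∈ range n, (A i).card) + ∑ k ∈ range (n - 1), (B k).card := by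
    rw [rdfWeight, weight_sum n hn f]
    congr 1
    · apply Finset.sum_congr rfl; intro i hi
      rw [Finset.mem_range] at hi
      simp [hAdef, dif_pos hi]
    · apply Finset.sum_congr rfl; intro k hk
      rw [Finset.mem_range] at hk
      have : k + 1 < n := by omega
      simp [hBdef, dif_pos this]
  rw [hw]
  exact core n (by omega) (fun i => (A i).card) (fun j => (B j).card)
    ha3 hb3 hb0 hA hB

/-! ### The construction for the upper bound -/

def fc (n : ℕ) : (Fin n ⊕ (pathGraph n).edgeSet) → Finset (Fin 3)
  | Sum.inl i => if i.val % 3 = 0 ∨ (n % 3 = 2 ∧ i.val = n - 1) then {0} else ∅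
  | Sum.inr e => if eIdx e % 3 = 1 then Finset.univ
      else if n % 3 = 2 ∧ eIdx e = n - 2 then {0} else ∅

lemma fc_isRDF (n : ℕ) (hn : 2 ≤ n) : IsRDF (middleGraph (pathGraph n)) 3 (fc n) := by
  rintro (i | e) hw c
  · -- vertex case
    simp only [fc] at hw
    split_ifs at hw with hcond
    · exact absurd hw (by simp)
    push_neg at hcond
    obtain ⟨h1, h2⟩ := hcond
    have hi3 : i.val % 3 = 1 ∨ i.val % 3 = 2 := by omega
    rcases hi3 with h3 | h3
    · -- use edge i
      have hne : i.val ≠ n - 1 := by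
        intro hh
        have : n % 3 = 2 := by omega
        exact (h2 this) hh
      have hk : i.val + 1 < n := by
        have := i.isLt; omega
      refine ⟨Sum.inr (pedge n i.val hk), adj_inl_inr i i.val hk (Or.inl rfl), ?_⟩
      simp only [fc, eIdx_pedge]
      rw [if_pos h3]
      exact Finset.mem_univ c
    · -- use edge i - 1
      have hi1 : 1 ≤ i.val := by omega
      have hk : (i.val - 1) + 1 < n := by have := i.isLt; omega
      refine ⟨Sum.inr (pedge n (i.val - 1) hk),
        adj_inl_inr i (i.val - 1) hk (Or.inr (by omega)), ?_⟩
      simp only [fc, eIdx_pedge]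
      rw [if_pos (by omega : (i.val - 1) % 3 = 1)]
      exact Finset.mem_univ c
  · -- edge case
    obtain ⟨k, hk, rfl⟩ := pedge_surj e
    simp only [fc, eIdx_pedge] at hw
    split_ifs at hw with hc1 hc2
    · exact absurd hw (by simp [Finset.univ_nonempty.ne_empty])
    · exact absurd hw (by simp)
    have hk3 : k % 3 = 0 ∨ k % 3 = 2 := by omega
    rcases hk3 with h3 | h3
    · -- use edge k+1, unless k = n-2, which is excluded
      have hkn : k ≠ n - 2 := by
        intro hh
        exact hc2 ⟨by omega, hh⟩
      have hj : (k + 1) + 1 < n := by omega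
      refine ⟨Sum.inr (pedge n (k + 1) hj),
        adj_inr_inr k (k + 1) hk hj (Or.inl rfl), ?_⟩
      simp only [fc, eIdx_pedge]
      rw [if_pos (by omega : (k + 1) % 3 = 1)]
      exact Finset.mem_univ c
    · -- use edge k-1
      have hj : (k - 1) + 1 < n := by omega
      refine ⟨Sum.inr (pedge n (k - 1) hj),
        adj_inr_inr k (k - 1) hk hj (Or.inr (by omega)), ?_⟩
      simp only [fc, eIdx_pedge]
      rw [if_pos (by omega : (k - 1) % 3 = 1)]
      exact Finset.mem_univ c

lemma s1 (m : ℕ) : (∑ i ∈ range m, if i % 3 = 0 then 1 else 0) = (m + 2) / 3 := by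
  induction m with
  | zero => simp
  | succ m ih =>
    rw [sum_range_succ, ih]
    split_ifs with h <;> omega

lemma s2 (m : ℕ) : (∑ i ∈ range m, if i % 3 = 1 then 3 else 0) = 3 * ((m + 1) / 3) := by
  induction m with
  | zero => simp
  | succ m ih =>
    rw [sum_range_succ, ih]
    split_ifs with h <;> omega

lemma fc_weight (n : ℕ) (hn : 2 ≤ n)
    [instS : Fintype (Fin n ⊕ (pathGraph n).edgeSet)] :
    rdfWeight (fc n) = (4 * n + 1) / 3 := by
  classical
  rw [rdfWeight, weight_sum n hn (fc n)]
  have hv : ∀ i, i < n →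
      (if h : i < n then ((fc n) (Sum.inl ⟨i, h⟩)).card else 0) =
        (if i % 3 = 0 ∨ (n % 3 = 2 ∧ i = n - 1) then 1 else 0) := by
    intro i hi
    rw [dif_pos hi]
    simp only [fc]
    split_ifs <;> simp_all
  have he : ∀ k, k + 1 < n →
      (if h : k + 1 < n then ((fc n) (Sum.inr (pedge n k h))).card else 0) =
        (if k % 3 = 1 then 3 else if n % 3 = 2 ∧ k = n - 2 then 1 else 0) := by
    intro k hk
    rw [dif_pos hk]
    simp only [fc, eIdx_pedge]
    split_ifs <;> simp_all
  rw [Finset.sum_congr rfl (fun i hi => hv i (Finset.mem_range.1 hi)),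
      Finset.sum_congr rfl (fun k hk => he k (by have := Finset.mem_range.1 hk; omega))]
  by_cases h2 : n % 3 = 2
  · obtain ⟨m, rfl⟩ : ∃ m, n = m + 2 := ⟨n - 2, by omega⟩
    have hs1 : m + 2 - 1 = m + 1 := rfl
    have hs2 : m + 2 - 2 = m := rfl
    rw [hs1, hs2]
    have e1 : (∑ i ∈ range (m + 2), if i % 3 = 0 ∨ ((m + 2) % 3 = 2 ∧ i = m + 1) then 1 else 0) =
        (∑ i ∈ range (m + 1), if i % 3 = 0 then 1 else 0) + 1 := by
      rw [Finset.sum_range_succ]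
      congr 1
      · apply Finset.sum_congr rfl
        intro i hi
        have hi' := Finset.mem_range.1 hi
        have hne : ¬ ((m + 2) % 3 = 2 ∧ i = m + 1) := by omega
        simp only [eq_false hne, or_false]
      · rw [if_pos (Or.inr ⟨h2, rfl⟩)]
    have e2 : (∑ k ∈ range (m + 1), if k % 3 = 1 then 3 else
          if (m + 2) % 3 = 2 ∧ k = m then 1 else 0) =
        (∑ k ∈ range m, if k % 3 = 1 then 3 else 0) + 1 := by
      rw [Finset.sum_range_succ]
      congr 1
      · apply Finset.sum_congr rfl
        intro k hk
        have hk' := Finset.mem_range.1 hk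
        have hne : ¬ ((m + 2) % 3 = 2 ∧ k = m) := by omega
        simp only [eq_false hne, if_false]
      · have hmod : ¬ (m % 3 = 1) := by omega
        rw [if_neg hmod, if_pos ⟨h2, rfl⟩]
    rw [e1, e2, s1, s2]
    omega
  · have e1 : (∑ i ∈ range n, if i % 3 = 0 ∨ (n % 3 = 2 ∧ i = n - 1) then 1 else 0) =
        ∑ i ∈ range n, if i % 3 = 0 then 1 else 0 := by
      apply Finset.sum_congr rfl
      intro i _
      have hne : ¬ (n % 3 = 2 ∧ i = n - 1) := by omega
      simp only [eq_false hne, or_false]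
    have e2 : (∑ k ∈ range (n - 1), if k % 3 = 1 then 3 else
          if n % 3 = 2 ∧ k = n - 2 then 1 else 0) =
        ∑ k ∈ range (n - 1), if k % 3 = 1 then 3 else 0 := by
      apply Finset.sum_congr rfl
      intro k _
      have hne : ¬ (n % 3 = 2 ∧ k = n - 2) := by omega
      simp only [eq_false hne, if_false]
    rw [e1, e2, s1, s2]
    have h3 : n % 3 = 0 ∨ n % 3 = 1 := by omega
    rcases h3 with h3 | h3 <;> omega

lemma key (n : ℕ) (hn : 2 ≤ n) [instS : Fintype (Fin n ⊕ (pathGraph n).edgeSet)] :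
    rdn (middleGraph (pathGraph n)) 3 = (4 * n + 1) / 3 := by
  have hmem : ∃ f, IsRDF (middleGraph (pathGraph n)) 3 f ∧
      rdfWeight f = (4 * n + 1) / 3 := ⟨fc n, fc_isRDF n hn, fc_weight n hn⟩
  rw [rdn]
  apply le_antisymm
  · exact Nat.sInf_le hmem
  · apply le_csInf
    · exact ⟨_, hmem⟩
    rintro m ⟨f, hf, rfl⟩
    have := lower n hn f hf
    omega

end S6

/-- middle 3-rainbow domination number of paths. -/
theorem stmt6 (n : ℕ) (hn : 2 ≤ n) :
    (n % 3 = 1 → mrdn (pathGraph n) 3 = (4 * n - 1) / 3) ∧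
    (n % 3 = 2 → mrdn (pathGraph n) 3 = (4 * n + 1) / 3) ∧
    (n % 3 = 0 → mrdn (pathGraph n) 3 = 4 * n / 3) := by
  have key : mrdn (pathGraph n) 3 = (4 * n + 1) / 3 := by
    unfold mrdn
    letI := Classical.decEq (Fin n)
    letI : DecidableRel (pathGraph n).Adj := fun _ _ => Classical.dec _
    exact S6.key n hn
  refine ⟨?_, ?_, ?_⟩ <;> intro h <;> rw [key] <;> omega
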